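/- Let R ⊆ Q be the set of all client states q such that q ∈ Set(c) for some configuration c reachable from an initial configuration of the broadcast network. There exists an initialized computation c_0 →* c →+ c with Set(c) ∩ F ≠ ∅ if and only if there exists an initialized computation c_0 →* c →+ c with Set(c) = R and R ∩ F ≠ ∅. -/

import Mathlib

/-- Communication operations over a message domain `D`: send `!a` or receive `?a`. -/
inductive Op (D : Type) where
  | send : D → Op D
  | recv : D → Op D
  deriving DecidableEq

/-- One transition `c →_a c'` of the broadcast network with sender `i` and receivers `R`:
the sender takes a send transition on `a`, every receiver takes a receive transition on `a`,
and all other clients stay idle. -/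
def StepAt {D Q : Type} (δ : Set (Q × Op D × Q)) (a : D) {k : ℕ}
    (c c' : Fin k → Q) (i : Fin k) (R : Set (Fin k)) : Prop :=
  i ∉ R ∧ (c i, Op.send a, c' i) ∈ δ ∧
    (∀ j ∈ R, (c j, Op.recv a, c' j) ∈ δ) ∧
    (∀ j, j ∉ R → j ≠ i → c' j = c j)

/-- A transition `c → c'` of the broadcast network (for some message, sender and receivers). -/
def Step {D Q : Type} (δ : Set (Q × Op D × Q)) {k : ℕ} (c c' : Fin k → Q) : Prop :=
  ∃ (a : D) (i : Fin k) (R : Set (Fin k)), StepAt δ a c c' i R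

lemma range_fin_append {Q : Type} {k m : ℕ} (c : Fin k → Q) (d : Fin m → Q) :
    Set.range (Fin.append c d) = Set.range c ∪ Set.range d := by
  ext q
  constructor
  · rintro ⟨j, rfl⟩
    refine Fin.addCases (fun j₀ => ?_) (fun j₀ => ?_) j
    · left; exact ⟨j₀, (Fin.append_left c d j₀).symm⟩
    · right; exact ⟨j₀, (Fin.append_right c d j₀).symm⟩
  · rintro (⟨j, rfl⟩ | ⟨j, rfl⟩)
    · exact ⟨Fin.castAdd m j, Fin.append_left c d j⟩
    · exact ⟨Fin.natAdd k j, Fin.append_right c d j⟩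

lemma step_append_left {D Q : Type} (δ : Set (Q × Op D × Q)) {k m : ℕ}
    {c c' : Fin k → Q} (d : Fin m → Q) (h : Step δ c c') :
    Step δ (Fin.append c d) (Fin.append c' d) := by
  obtain ⟨a, i, R, hiR, hsend, hrecv, hidle⟩ := h
  refine ⟨a, Fin.castAdd m i, Fin.castAdd m '' R, ?_, ?_, ?_, ?_⟩
  · rintro ⟨j, hj, hji⟩
    exact hiR ((Fin.castAdd_injective k m).eq_iff.mp hji ▸ hj)
  · simpa [Fin.append_left] using hsend
  · rintro j ⟨j₀, hj₀, rfl⟩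
    simpa [Fin.append_left] using hrecv j₀ hj₀
  · intro j hjR hji
    refine Fin.addCases (fun j₀ h1 h2 => ?_) (fun j₀ _ _ => ?_) j hjR hji
    · simp only [Fin.append_left]
      exact hidle j₀ (fun hm => h1 ⟨j₀, hm, rfl⟩) (fun hm => h2 (by rw [hm]))
    · simp [Fin.append_right]

lemma step_append_right {D Q : Type} (δ : Set (Q × Op D × Q)) {k m : ℕ}
    (c : Fin k → Q) {d d' : Fin m → Q} (h : Step δ d d') :
    Step δ (Fin.append c d) (Fin.append c d') := by
  obtain ⟨a, i, R, hiR, hsend, hrecv, hidle⟩ := h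
  refine ⟨a, Fin.natAdd k i, Fin.natAdd k '' R, ?_, ?_, ?_, ?_⟩
  · rintro ⟨j, hj, hji⟩
    have hje : j = i := by
      have := congrArg Fin.val hji
      simp only [Fin.natAdd] at this
      exact Fin.ext (Nat.add_left_cancel this)
    exact hiR (hje ▸ hj)
  · simpa [Fin.append_right] using hsend
  · rintro j ⟨j₀, hj₀, rfl⟩
    simpa [Fin.append_right] using hrecv j₀ hj₀
  · intro j hjR hji
    refine Fin.addCases (fun j₀ _ _ => ?_) (fun j₀ h1 h2 => ?_) j hjR hji
    · simp [Fin.append_left]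
    · simp only [Fin.append_right]
      exact hidle j₀ (fun hm => h1 ⟨j₀, hm, rfl⟩) (fun hm => h2 (by rw [hm]))

lemma rtg_append {D Q : Type} (δ : Set (Q × Op D × Q)) {k m : ℕ}
    {c c' : Fin k → Q} {d d' : Fin m → Q}
    (h1 : Relation.ReflTransGen (Step δ) c c') (h2 : Relation.ReflTransGen (Step δ) d d') :
    Relation.ReflTransGen (Step δ) (Fin.append c d) (Fin.append c' d') := by
  have l1 : Relation.ReflTransGen (Step δ) (Fin.append c d) (Fin.append c' d) :=
    Relation.ReflTransGen.lift (fun x => Fin.append x d)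
      (fun _ _ h => step_append_left δ d h) _ _ h1
  have l2 : Relation.ReflTransGen (Step δ) (Fin.append c' d) (Fin.append c' d') :=
    Relation.ReflTransGen.lift (fun x => Fin.append c' x)
      (fun _ _ h => step_append_right δ c' h) _ _ h2
  exact l1.trans l2

/-- Let `R` be the set of all client states occurring in some configuration reachable from an
initial configuration. There is an initialized computation `c₀ →* c →+ c` with
`Set(c) ∩ F ≠ ∅` iff there is an initialized computation `c₀ →* c →+ c` with `Set(c) = R`
and `R ∩ F ≠ ∅`. -/
theorem cycle_over_all_reachable_states {D Q : Type} [Fintype Q] (δ : Set (Q × Op D × Q))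
    (I F : Set Q) (R : Set Q)
    (hR : R = {q | ∃ (k : ℕ) (c₀ c : Fin k → Q), (∀ t, c₀ t ∈ I) ∧
      Relation.ReflTransGen (Step δ) c₀ c ∧ q ∈ Set.range c}) :
    (∃ (k : ℕ) (c₀ c : Fin k → Q), (∀ t, c₀ t ∈ I) ∧
      Relation.ReflTransGen (Step δ) c₀ c ∧ Relation.TransGen (Step δ) c c ∧
      (Set.range c ∩ F).Nonempty) ↔
    (∃ (k : ℕ) (c₀ c : Fin k → Q), (∀ t, c₀ t ∈ I) ∧
      Relation.ReflTransGen (Step δ) c₀ c ∧ Relation.TransGen (Step δ) c c ∧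
      Set.range c = R ∧ (R ∩ F).Nonempty) := by
  classical
  -- any reachable configuration has range inside R
  have hsub : ∀ {k : ℕ} (c₀ c : Fin k → Q), (∀ t, c₀ t ∈ I) →
      Relation.ReflTransGen (Step δ) c₀ c → Set.range c ⊆ R := by
    intro k c₀ c hinit hreach q hq
    rw [hR]
    exact ⟨k, c₀, c, hinit, hreach, hq⟩
  constructor
  · rintro ⟨k, c₀, c, hinit, hreach, hcyc, qf, hqf, hqF⟩
    -- cover: a computation whose final configuration covers any finite subset of R
    have cover : ∀ S : Finset Q, ↑S ⊆ R → ∃ (m : ℕ) (d₀ d : Fin m → Q),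
        (∀ t, d₀ t ∈ I) ∧ Relation.ReflTransGen (Step δ) d₀ d ∧ ↑S ⊆ Set.range d := by
      intro S
      induction S using Finset.induction_on with
      | empty =>
        intro _
        exact ⟨0, Fin.elim0, Fin.elim0, fun t => t.elim0, Relation.ReflTransGen.refl,
          by simp⟩
      | @insert q S' hq ih =>
        intro hSR
        have hS'R : ↑S' ⊆ R := fun x hx => hSR (by simp [hx])
        obtain ⟨m, d₀, d, hd₀, hd, hScov⟩ := ih hS'R
        have hqR : q ∈ R := hSR (by simp)
        rw [hR] at hqR
        obtain ⟨n, e₀, e, he₀, he, hqe⟩ := hqR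
        refine ⟨m + n, Fin.append d₀ e₀, Fin.append d e, ?_, rtg_append δ hd he, ?_⟩
        · intro t
          refine Fin.addCases (fun t₀ => ?_) (fun t₀ => ?_) t
          · rw [Fin.append_left]; exact hd₀ t₀
          · rw [Fin.append_right]; exact he₀ t₀
        · rw [range_fin_append]
          intro x hx
          rcases Finset.mem_insert.mp hx with rfl | hx'
          · exact Or.inr hqe
          · exact Or.inl (hScov hx')
    obtain ⟨m, d₀, d, hd₀, hd, hcov⟩ := cover R.toFinset (by simp)
    have hRcov : R ⊆ Set.range d := by simpa using hcov
    refine ⟨k + m, Fin.append c₀ d₀, Fin.append c d, ?_, rtg_append δ hreach hd, ?_, ?_, ?_⟩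
    · intro t
      refine Fin.addCases (fun t₀ => ?_) (fun t₀ => ?_) t
      · rw [Fin.append_left]; exact hinit t₀
      · rw [Fin.append_right]; exact hd₀ t₀
    · exact Relation.TransGen.lift (fun x => Fin.append x d)
        (fun _ _ h => step_append_left δ d h) _ _ hcyc
    · rw [range_fin_append]
      apply Set.Subset.antisymm
      · exact Set.union_subset (hsub c₀ c hinit hreach) (hsub d₀ d hd₀ hd)
      · exact fun x hx => Or.inr (hRcov hx)
    · exact ⟨qf, hsub c₀ c hinit hreach hqf, hqF⟩
  · rintro ⟨k, c₀, c, hinit, hreach, hcyc, hrange, hRF⟩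
    exact ⟨k, c₀, c, hinit, hreach, hcyc, hrange ▸ hRF⟩
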